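/- Let (p_k)_{k≥0} be nonnegative reals with Σ_k p_k = 1 and μ := Σ_k k p_k satisfying 1 < μ < ∞, and let f(s) = Σ_k p_k s^k. Let q ∈ [0,1) satisfy f(q) = q. Then f'(1) + f'(q) ≥ 2, where f'(1) = Σ_k k p_k and f'(q) = Σ_k k p_k q^{k-1}. Moreover, equality f'(1) + f'(q) = 2 holds if and only if p_k = 0 for every k ≥ 3. -/
import Mathlib


open Filter

/-- The pairing sum appearing in the trapezoid identity. -/
noncomputable def Bsum (q : ℝ) (k : ℕ) : ℝ :=
  ∑ j ∈ Finset.range k, (1 - q ^ j) * (1 - q ^ (k - 1 - j))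

lemma Bsum_eq (q : ℝ) (k : ℕ) :
    Bsum q k = (k : ℝ) * (1 + q ^ (k - 1)) - 2 * ∑ j ∈ Finset.range k, q ^ j := by
  unfold Bsum
  have h1 : ∀ j ∈ Finset.range k,
      (1 - q ^ j) * (1 - q ^ (k - 1 - j)) = 1 - q ^ (k - 1 - j) - q ^ j + q ^ (k - 1) := by
    intro j hj
    have hj' : j < k := Finset.mem_range.mp hj
    have hjk : j + (k - 1 - j) = k - 1 := by omega
    have : q ^ j * q ^ (k - 1 - j) = q ^ (k - 1) := by rw [← pow_add, hjk]
    calc (1 - q ^ j) * (1 - q ^ (k - 1 - j))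
        = 1 - q ^ (k - 1 - j) - q ^ j + q ^ j * q ^ (k - 1 - j) := by ring
      _ = 1 - q ^ (k - 1 - j) - q ^ j + q ^ (k - 1) := by rw [this]
  rw [Finset.sum_congr rfl h1]
  have h2 : ∑ j ∈ Finset.range k, q ^ (k - 1 - j) = ∑ j ∈ Finset.range k, q ^ j :=
    Finset.sum_range_reflect (fun j => q ^ j) k
  simp only [Finset.sum_add_distrib, Finset.sum_sub_distrib, Finset.sum_const,
    Finset.card_range, nsmul_eq_mul, h2]
  ring

lemma Bsum_nonneg {q : ℝ} (hq0 : 0 ≤ q) (hq1 : q < 1) (k : ℕ) : 0 ≤ Bsum q k := by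
  refine Finset.sum_nonneg fun j _ => mul_nonneg ?_ ?_ <;>
    exact sub_nonneg.mpr (pow_le_one₀ hq0 hq1.le)

lemma Bsum_pos {q : ℝ} (hq0 : 0 ≤ q) (hq1 : q < 1) {k : ℕ} (hk : 3 ≤ k) :
    0 < Bsum q k := by
  have h1 : (1 : ℕ) ∈ Finset.range k := Finset.mem_range.mpr (by omega)
  have hterm : 0 < (1 - q ^ 1) * (1 - q ^ (k - 1 - 1)) := by
    apply mul_pos
    · exact sub_pos.mpr (by simpa using hq1)
    · exact sub_pos.mpr (pow_lt_one₀ hq0 hq1 (by omega))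
  calc 0 < (1 - q ^ 1) * (1 - q ^ (k - 1 - 1)) := hterm
    _ ≤ Bsum q k :=
      Finset.single_le_sum (f := fun j => (1 - q ^ j) * (1 - q ^ (k - 1 - j)))
        (fun j _ => mul_nonneg
        (sub_nonneg.mpr (pow_le_one₀ hq0 hq1.le))
        (sub_nonneg.mpr (pow_le_one₀ hq0 hq1.le))) h1

lemma Bsum_zero_of_le_two (q : ℝ) {k : ℕ} (hk : k ≤ 2) : Bsum q k = 0 := by
  interval_cases k <;> simp [Bsum, Finset.sum_range_succ]

theorem fprime_one_add_fprime_q_ge_two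
    (p : ℕ → ℝ) (hp : ∀ k, 0 ≤ p k) (hpsum : Summable p) (hpsum1 : ∑' k, p k = 1)
    (hμsum : Summable fun k : ℕ => (k : ℝ) * p k)
    (hμ : 1 < ∑' k : ℕ, (k : ℝ) * p k)
    (q : ℝ) (hq0 : 0 ≤ q) (hq1 : q < 1) (hfq : ∑' k : ℕ, p k * q ^ k = q) :
    2 ≤ (∑' k : ℕ, (k : ℝ) * p k) + (∑' k : ℕ, (k : ℝ) * p k * q ^ (k - 1)) ∧
    ((∑' k : ℕ, (k : ℝ) * p k) + (∑' k : ℕ, (k : ℝ) * p k * q ^ (k - 1)) = 2 ↔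
      ∀ k, 3 ≤ k → p k = 0) := by
  have hq1' : (0:ℝ) < 1 - q := by linarith
  set t : ℝ := 2 / (1 - q) with ht_def
  have ht : t * (1 - q) = 2 := div_mul_cancel₀ 2 hq1'.ne'
  -- summability facts
  have hS2 : Summable (fun k : ℕ => (k : ℝ) * p k * q ^ (k - 1)) := by
    refine Summable.of_nonneg_of_le (fun k => ?_) (fun k => ?_) hμsum
    · exact mul_nonneg (mul_nonneg (Nat.cast_nonneg k) (hp k)) (pow_nonneg hq0 _)
    · calc (k : ℝ) * p k * q ^ (k - 1) ≤ (k : ℝ) * p k * 1 := by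
            apply mul_le_mul_of_nonneg_left (pow_le_one₀ hq0 hq1.le)
              (mul_nonneg (Nat.cast_nonneg k) (hp k))
        _ = (k : ℝ) * p k := mul_one _
  have hqpow : Summable (fun k : ℕ => p k * q ^ k) := by
    refine Summable.of_nonneg_of_le (fun k => ?_) (fun k => ?_) hpsum
    · exact mul_nonneg (hp k) (pow_nonneg hq0 _)
    · calc p k * q ^ k ≤ p k * 1 :=
            mul_le_mul_of_nonneg_left (pow_le_one₀ hq0 hq1.le) (hp k)
        _ = p k := mul_one _
  have hsub : Summable (fun k : ℕ => p k - p k * q ^ k) := hpsum.sub hqpow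
  have htsub : ∑' k : ℕ, (p k - p k * q ^ k) = 1 - q := by
    rw [Summable.tsum_sub hpsum hqpow, hpsum1, hfq]
  -- the key pointwise decomposition
  set c : ℕ → ℝ := fun k =>
    (k : ℝ) * p k + (k : ℝ) * p k * q ^ (k - 1) - t * (p k - p k * q ^ k) with hc_def
  set d : ℕ → ℝ := fun k => (k : ℝ) * (1 + q ^ (k - 1)) - t * (1 - q ^ k) with hd_def
  have hcd : ∀ k, c k = p k * d k := by intro k; simp only [hc_def, hd_def]; ring
  have hdB : ∀ k, d k = Bsum q k := by
    intro k
    have key : (1 - q) * d k = (1 - q) * Bsum q k := by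
      have hgeo : (1 - q) * ∑ j ∈ Finset.range k, q ^ j = 1 - q ^ k := by
        have := geom_sum_mul q k
        nlinarith [this]
      rw [Bsum_eq]
      have expand : (1 - q) * d k
          = (k : ℝ) * (1 - q) * (1 + q ^ (k - 1)) - (t * (1 - q)) * (1 - q ^ k) := by
        simp only [hd_def]; ring
      rw [expand, ht, ← hgeo]
      ring
    exact mul_left_cancel₀ hq1'.ne' key
  have hc_nonneg : ∀ k, 0 ≤ c k := by
    intro k
    rw [hcd k]
    exact mul_nonneg (hp k) (by rw [hdB k]; exact Bsum_nonneg hq0 hq1 k)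
  have hc_sum : Summable c := (hμsum.add hS2).sub (hsub.mul_left t)
  have hc_tsum : ∑' k, c k
      = (∑' k : ℕ, (k : ℝ) * p k) + (∑' k : ℕ, (k : ℝ) * p k * q ^ (k - 1)) - 2 := by
    simp only [hc_def]
    rw [Summable.tsum_sub (hμsum.add hS2) (hsub.mul_left t), Summable.tsum_add hμsum hS2,
      tsum_mul_left, htsub, ht]
  have h0 : 0 ≤ ∑' k, c k := tsum_nonneg hc_nonneg
  constructor
  · linarith [h0, hc_tsum.symm ▸ h0]
  · constructor
    · intro heq k hk
      by_contra hne
      have hpk : 0 < p k := lt_of_le_of_ne (hp k) (Ne.symm hne)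
      have hck : 0 < c k := by
        rw [hcd k, hdB k]
        exact mul_pos hpk (Bsum_pos hq0 hq1 hk)
      have hle : c k ≤ ∑' j, c j := Summable.le_tsum hc_sum k (fun j _ => hc_nonneg j)
      rw [hc_tsum, heq] at hle
      linarith
    · intro hzero
      have hc0 : ∀ k, c k = 0 := by
        intro k
        rcases le_or_gt k 2 with hk | hk
        · rw [hcd k, hdB k, Bsum_zero_of_le_two q hk, mul_zero]
        · rw [hcd k, hzero k (by omega), zero_mul]
      have : ∑' k, c k = 0 := by
        rw [tsum_congr hc0]; exact tsum_zero
      linarith [hc_tsum ▸ this]
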